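/- Let d ≥ 2 and let p, q be partitions of n such that every part of p occurs with multiplicity divisible by d (p = p' ⊔ ... ⊔ p', d copies) and every part of q occurs with multiplicity divisible by d (q = q' ⊔ ... ⊔ q', d copies), with p' ≥ q' in the dominance order. If for all t, 0 ≤ (sum of first t parts of p) − (sum of first t parts of q) ≤ 1, then p = q. -/

import Mathlib

/-- Sum of the `t` largest elements of a multiset of naturals. -/
def sumLargest (M : Multiset ℕ) (t : ℕ) : ℕ := (((M.sort (· ≤ ·)).reverse).take t).sum

/-- Dominance order: for every `t`, the sum of the `t` largest parts of `M` is at least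
that of `N`. -/
def Dom (M N : Multiset ℕ) : Prop := ∀ t, sumLargest N t ≤ sumLargest M t

lemma coe_flatMap_replicate (d : ℕ) (L : List ℕ) :
    ((L.flatMap (List.replicate d) : List ℕ) : Multiset ℕ) = d • (L : Multiset ℕ) := by
  induction L with
  | nil => simp
  | cons a L ih =>
      simp only [List.flatMap_cons, ← Multiset.coe_add, ih, Multiset.coe_replicate]
      rw [show ((a :: L : List ℕ) : Multiset ℕ) = a ::ₘ (L : Multiset ℕ) from rfl,
        show (a ::ₘ (L : Multiset ℕ)) = (Multiset.replicate 1 a + (L : Multiset ℕ)) from rfl, smul_add]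
      congr 1
      rw [Multiset.nsmul_replicate, mul_one]

lemma sorted_flatMap_replicate (d : ℕ) (L : List ℕ) (h : L.Pairwise (· ≤ ·)) :
    (L.flatMap (List.replicate d)).Pairwise (· ≤ ·) := by
  induction L with
  | nil => simp
  | cons a L ih =>
      rw [List.pairwise_cons] at h
      rw [List.flatMap_cons, List.pairwise_append]
      refine ⟨?_, ih h.2, ?_⟩
      · exact List.pairwise_replicate.2 (Or.inr le_rfl)
      · intro x hx y hy
        rw [List.eq_of_mem_replicate hx]
        obtain ⟨c, hc, hy⟩ := List.mem_flatMap.1 hy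
        rw [List.eq_of_mem_replicate hy]
        exact h.1 c hc

lemma sort_nsmul (d : ℕ) (M : Multiset ℕ) :
    (d • M).sort (· ≤ ·) = (M.sort (· ≤ ·)).flatMap (List.replicate d) := by
  refine List.Perm.eq_of_pairwise' (Multiset.pairwise_sort _ _)
    (sorted_flatMap_replicate d _ (Multiset.pairwise_sort _ _)) ?_
  rw [← Multiset.coe_eq_coe, Multiset.sort_eq, coe_flatMap_replicate, Multiset.sort_eq]

lemma take_sum_flatMap (d : ℕ) (R : List ℕ) (t : ℕ) :
    ((R.flatMap (List.replicate d)).take (d * t)).sum = d * (R.take t).sum := by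
  induction R generalizing t with
  | nil => simp
  | cons a R ih =>
      cases t with
      | zero => simp
      | succ t =>
          have hta := List.take_length_add_append (l₁ := List.replicate d a)
            (l₂ := R.flatMap (List.replicate d)) (d * t)
          rw [List.length_replicate] at hta
          rw [List.flatMap_cons, show d * (t+1) = d + d * t by ring, hta,
            List.sum_append, List.take_succ_cons, List.sum_cons, List.sum_replicate,
            ih t, Nat.mul_add, smul_eq_mul]

lemma sumLargest_nsmul (d : ℕ) (M : Multiset ℕ) (t : ℕ) :
    sumLargest (d • M) (d * t) = d * sumLargest M t := by
  unfold sumLargest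
  rw [sort_nsmul, List.reverse_flatMap]
  have : (List.reverse ∘ List.replicate d) = (List.replicate d : ℕ → List ℕ) := by
    funext a; simp
  rw [this, take_sum_flatMap]

lemma list_eq_of_take_sum (L : List ℕ) : ∀ (K : List ℕ), (∀ x ∈ L, x ≠ 0) →
    (∀ x ∈ K, x ≠ 0) → (∀ t, (L.take t).sum = (K.take t).sum) → L = K := by
  induction L with
  | nil =>
      intro K _ hK h
      cases K with
      | nil => rfl
      | cons b K =>
          have h1 := h 1
          simp at h1
          exact (hK b (by simp) h1.symm).elim
  | cons a L ih =>
      intro K hL hK h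
      cases K with
      | nil =>
          have h1 := h 1
          simp at h1
          exact (hL a (by simp) h1).elim
      | cons b K =>
          have hab : a = b := by simpa using h 1
          have : L = K := by
            refine ih K (fun x hx => hL x (by simp [hx])) (fun x hx => hK x (by simp [hx])) ?_
            intro t
            have := h (t + 1)
            simp only [List.take_succ_cons, List.sum_cons, hab] at this
            omega
          rw [hab, this]

lemma multiset_eq_of_sumLargest (M N : Multiset ℕ) (hM : 0 ∉ M) (hN : 0 ∉ N)
    (h : ∀ t, sumLargest M t = sumLargest N t) : M = N := by
  have key : (M.sort (· ≤ ·)).reverse = (N.sort (· ≤ ·)).reverse := by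
    refine list_eq_of_take_sum _ _ ?_ ?_ h
    · intro x hx hx0
      apply hM
      rw [← Multiset.sort_eq M (· ≤ ·)]
      subst hx0
      exact List.mem_reverse.1 hx
    · intro x hx hx0
      apply hN
      rw [← Multiset.sort_eq N (· ≤ ·)]
      subst hx0
      exact List.mem_reverse.1 hx
  have : M.sort (· ≤ ·) = N.sort (· ≤ ·) := by
    have := congrArg List.reverse key
    simpa using this
  rw [← Multiset.sort_eq M (· ≤ ·), ← Multiset.sort_eq N (· ≤ ·), this]

/-- let `d ≥ 2` and let `p, q` be partitions of `n` that are `d`-fold unions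
`p = d • p'`, `q = d • q'` (every part occurs with multiplicity divisible by `d`), with
`p' ≥ q'` in the dominance order. If every partial-sum difference of `p` over `q` lies in
`{0, 1}`, then `p = q`. -/
theorem stmt_17 (d n : ℕ) (hd : 2 ≤ d) (p q p' q' : Multiset ℕ)
    (hp : p.sum = n) (hq : q.sum = n) (hp0 : 0 ∉ p) (hq0 : 0 ∉ q)
    (hpp : p = d • p') (hqq : q = d • q')
    (hdom' : Dom p' q')
    (hdiff : ∀ t, sumLargest q t ≤ sumLargest p t ∧ sumLargest p t ≤ sumLargest q t + 1) :
    p = q := by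
  have hd0 : d ≠ 0 := by omega
  have hkey : ∀ t, sumLargest p' t = sumLargest q' t := by
    intro t
    have h1 : sumLargest q' t ≤ sumLargest p' t := hdom' t
    have h2 := (hdiff (d * t)).2
    rw [hpp, hqq, sumLargest_nsmul, sumLargest_nsmul] at h2
    nlinarith
  have hp'0 : 0 ∉ p' := fun h => hp0 (hpp ▸ Multiset.mem_nsmul.2 ⟨hd0, h⟩)
  have hq'0 : 0 ∉ q' := fun h => hq0 (hqq ▸ Multiset.mem_nsmul.2 ⟨hd0, h⟩)
  rw [hpp, hqq, multiset_eq_of_sumLargest p' q' hp'0 hq'0 hkey]
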